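/- Let ρ̄ be a probability density on 𝕋^d and φ: 𝕋^d × 𝕋^d × 𝕋^d → ℝ a bounded measurable function such that ∫_{𝕋^{2d}} φ(x, z, z') ρ̄(z) ρ̄(z') dz dz' = 0 for all x. Let 1 ≤ l ≤ 2m and multi-indices (i_1,…,i_{2m}), (j_1,…,j_{2m}), (k_1,…,k_{2m}) in {1,…,N} satisfy: j_l ≠ k_l, and neither j_l nor k_l appears among the indices i_1,…,i_{2m}, nor among j_t (t ≠ l) or k_t (t ≠ l). Then ∫_{𝕋^{dN}} Π_{t=1}^{2m} φ(x_{i_t}, x_{j_t}, x_{k_t}) · Π_{s=1}^N ρ̄(x_s) dX = 0. -/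

import Mathlib

open MeasureTheory

/-- The `d`-dimensional torus `𝕋^d = [0,1]^d`. -/
abbrev Torus (d : ℕ) := Fin d → AddCircle (1 : ℝ)

/-- Second cancellation property: if `∫∫ φ(x,z,z') ρ̄(z) ρ̄(z') dz dz' = 0` for all `x`,
and `j_l ≠ k_l` with neither `j_l` nor `k_l` appearing among the `i`-indices nor among
the other `j`- and `k`-indices, then
`∫ Π_t φ(x_{i_t}, x_{j_t}, x_{k_t}) ρ̄^{⊗N} dX = 0`. -/
theorem stmt12 {d N m : ℕ} (hd : 0 < d) (hN : 0 < N) (hm : 0 < m)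
    (ρ : Torus d → ℝ) (hρmeas : Measurable ρ) (hρ0 : ∀ x, 0 ≤ ρ x)
    (hρ1 : ∫ x : Torus d, ρ x = 1)
    (φ : Torus d → Torus d → Torus d → ℝ)
    (hφmeas : Measurable fun p : Torus d × Torus d × Torus d => φ p.1 p.2.1 p.2.2)
    (C : ℝ) (hφbdd : ∀ x z z', |φ x z z'| ≤ C)
    (hcancel : ∀ x, ∫ z : Torus d, ∫ z' : Torus d, φ x z z' * (ρ z * ρ z') = 0)
    (i j k : Fin (2 * m) → Fin N) (l : Fin (2 * m))
    (hjk : j l ≠ k l)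
    (hij : ∀ t, i t ≠ j l) (hik : ∀ t, i t ≠ k l)
    (hjj : ∀ t, t ≠ l → j t ≠ j l ∧ j t ≠ k l)
    (hkk : ∀ t, t ≠ l → k t ≠ j l ∧ k t ≠ k l) :
    ∫ X : Fin N → Torus d,
      (∏ t, φ (X (i t)) (X (j t)) (X (k t))) * ∏ s, ρ (X s) = 0 := by
  classical
  -- ρ is integrable
  have hρint : Integrable ρ := by
    by_contra h
    rw [integral_undef h] at hρ1
    exact zero_ne_one hρ1
  -- key cancellation in product form
  have hφint : ∀ c : Torus d, Integrable (fun zz : Torus d × Torus d => φ c zz.1 zz.2 * (ρ zz.1 * ρ zz.2))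
      ((volume : Measure (Torus d)).prod volume) := by
    intro c
    refine Integrable.bdd_mul (hρint.mul_prod hρint) ?_ (Filter.Eventually.of_forall fun zz => by
      simpa [Real.norm_eq_abs] using hφbdd c zz.1 zz.2)
    exact (hφmeas.comp ((measurable_const.prodMk
      (measurable_fst.prodMk measurable_snd)) :
      Measurable fun zz : Torus d × Torus d => (c, zz.1, zz.2))).aestronglyMeasurable
  have key : ∀ c : Torus d, (∫ zz : Torus d × Torus d, φ c zz.1 zz.2 * (ρ zz.1 * ρ zz.2)
      ∂((volume : Measure (Torus d)).prod volume)) = 0 := by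
    intro c
    rw [integral_prod _ (hφint c)]
    simpa using hcancel c
  -- the integrand
  set F : (Fin N → Torus d) → ℝ := fun X =>
    (∏ t, φ (X (i t)) (X (j t)) (X (k t))) * ∏ s, ρ (X s) with hF
  -- measurability and integrability of F
  have hφtmeas : ∀ t, Measurable fun X : Fin N → Torus d => φ (X (i t)) (X (j t)) (X (k t)) := by
    intro t
    have : Measurable fun X : Fin N → Torus d => (X (i t), X (j t), X (k t)) :=
      (measurable_pi_apply _).prodMk ((measurable_pi_apply _).prodMk (measurable_pi_apply _))
    exact hφmeas.comp this
  have hΦmeas : Measurable fun X : Fin N → Torus d => ∏ t, φ (X (i t)) (X (j t)) (X (k t)) :=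
    Finset.measurable_prod _ fun t _ => hφtmeas t
  have hPint : Integrable (fun X : Fin N → Torus d => ∏ s, ρ (X s)) :=
    Integrable.fintype_prod (f := fun _ : Fin N => ρ) fun _ => hρint
  have hFint : Integrable F := by
    refine Integrable.bdd_mul hPint hΦmeas.aestronglyMeasurable (c := C ^ (2 * m)) (Filter.Eventually.of_forall fun X => ?_)
    rw [Real.norm_eq_abs, Finset.abs_prod]
    calc (∏ t, |φ (X (i t)) (X (j t)) (X (k t))|) ≤ ∏ _t : Fin (2 * m), C :=
          Finset.prod_le_prod (fun _ _ => abs_nonneg _) fun t _ => hφbdd _ _ _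
      _ = C ^ (2 * m) := by simp
  -- split off coordinates j l and k l
  set p : Fin N → Prop := fun s => s = j l ∨ s = k l with hp
  have hpj : p (j l) := Or.inl rfl
  have hpk : p (k l) := Or.inr rfl
  set e := MeasurableEquiv.piEquivPiSubtypeProd (fun _ : Fin N => Torus d) p with he
  have mp := measurePreserving_piEquivPiSubtypeProd (fun _ : Fin N => (volume : Measure (Torus d))) p
  set μA : Measure ({s // p s} → Torus d) := Measure.pi fun _ => volume with hμA
  set μB : Measure ({s // ¬ p s} → Torus d) := Measure.pi fun _ => volume with hμB
  set G : ({s // p s} → Torus d) × ({s // ¬ p s} → Torus d) → ℝ := fun y => F (e.symm y) with hG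
  have hstep : (∫ X : Fin N → Torus d, F X ∂(Measure.pi fun _ => volume))
      = ∫ y, G y ∂(μA.prod μB) := by
    rw [← mp.integral_comp' (f := e) G]
    congr 1
    funext X
    simp [hG]
  have hGint : Integrable G (μA.prod μB) := by
    rw [← mp.integrable_comp_emb e.measurableEmbedding]
    have : G ∘ e = F := by
      funext X
      simp [hG, Function.comp]
    rw [this]
    exact hFint
  -- values of e.symm
  have hXp : ∀ (a : {s // p s} → Torus d) (b : {s // ¬ p s} → Torus d) (s : Fin N) (h : p s),
      e.symm (a, b) s = a ⟨s, h⟩ := by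
    intro a b s h
    simp [he, MeasurableEquiv.piEquivPiSubtypeProd, Equiv.piEquivPiSubtypeProd_symm_apply, h]
  have hXnp : ∀ (a : {s // p s} → Torus d) (b : {s // ¬ p s} → Torus d) (s : Fin N) (h : ¬ p s),
      e.symm (a, b) s = b ⟨s, h⟩ := by
    intro a b s h
    simp [he, MeasurableEquiv.piEquivPiSubtypeProd, Equiv.piEquivPiSubtypeProd_symm_apply, h]
  -- the pair measure as a product
  have hfne : (⟨k l, hpk⟩ : {s // p s}) ≠ ⟨j l, hpj⟩ := by
    simp [Subtype.ext_iff]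
    exact fun h => hjk h.symm
  set f : Fin 2 ≃ {s // p s} :=
    { toFun := ![⟨j l, hpj⟩, ⟨k l, hpk⟩]
      invFun := fun s => if s.1 = j l then 0 else 1
      left_inv := by
        intro x
        fin_cases x
        · simp
        · simp
          intro h
          exact absurd h (fun h => hjk h.symm)
      right_inv := by
        rintro ⟨s, hs | hs⟩
        · subst hs; simp
        · subst hs
          simp only
          rw [if_neg (fun h => hjk h.symm)]
          rfl } with hf
  set ψ : (Torus d × Torus d) ≃ᵐ ({s // p s} → Torus d) :=
    (MeasurableEquiv.finTwoArrow.symm.trans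
      (MeasurableEquiv.piCongrLeft (fun _ : {s // p s} => Torus d) f)) with hψ
  have mpψ : MeasurePreserving ψ ((volume : Measure (Torus d)).prod volume) μA := by
    have h1 := measurePreserving_piCongrLeft (fun _ : {s // p s} => (volume : Measure (Torus d))) f
    have h2 := (measurePreserving_finTwoArrow (volume : Measure (Torus d))).symm
      MeasurableEquiv.finTwoArrow
    have hcoe : ⇑ψ = ⇑(MeasurableEquiv.piCongrLeft (fun _ : {s // p s} => Torus d) f) ∘
        ⇑MeasurableEquiv.finTwoArrow.symm := rfl
    rw [hcoe]
    exact h1.comp h2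
  have hψj : ∀ zz : Torus d × Torus d, ψ zz ⟨j l, hpj⟩ = zz.1 := by
    intro zz
    show (MeasurableEquiv.piCongrLeft (fun _ : {s // p s} => Torus d) f)
      (MeasurableEquiv.finTwoArrow.symm zz) (f 0) = zz.1
    rw [MeasurableEquiv.piCongrLeft]
    simp [Equiv.piCongrLeft_apply_apply, MeasurableEquiv.finTwoArrow]
  have hψk : ∀ zz : Torus d × Torus d, ψ zz ⟨k l, hpk⟩ = zz.2 := by
    intro zz
    show (MeasurableEquiv.piCongrLeft (fun _ : {s // p s} => Torus d) f)
      (MeasurableEquiv.finTwoArrow.symm zz) (f 1) = zz.2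
    rw [MeasurableEquiv.piCongrLeft]
    simp [Equiv.piCongrLeft_apply_apply, MeasurableEquiv.finTwoArrow]
  -- inner integral vanishes
  have keyA : ∀ c : Torus d, (∫ a : {s // p s} → Torus d,
      φ c (a ⟨j l, hpj⟩) (a ⟨k l, hpk⟩) * (ρ (a ⟨j l, hpj⟩) * ρ (a ⟨k l, hpk⟩)) ∂μA) = 0 := by
    intro c
    rw [← mpψ.integral_comp' (f := ψ)
      (fun a => φ c (a ⟨j l, hpj⟩) (a ⟨k l, hpk⟩) * (ρ (a ⟨j l, hpj⟩) * ρ (a ⟨k l, hpk⟩)))]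
    simp_rw [hψj, hψk]
    exact key c
  have hinner : ∀ b : {s // ¬ p s} → Torus d, (∫ a, G (a, b) ∂μA) = 0 := by
    intro b
    have hnpil : ¬ p (i l) := by
      rintro (h | h)
      exacts [hij l h, hik l h]
    set a₀ : {s // p s} → Torus d := fun _ => fun _ => (0 : AddCircle (1 : ℝ)) with ha₀
    set K : ℝ :=
      ((∏ t ∈ Finset.univ.erase l,
          φ (e.symm (a₀, b) (i t)) (e.symm (a₀, b) (j t)) (e.symm (a₀, b) (k t))) *
        ∏ s ∈ (Finset.univ.erase (j l)).erase (k l), ρ (e.symm (a₀, b) s)) with hK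
    have hfac : ∀ a, G (a, b) = K *
        (φ (e.symm (a₀, b) (i l)) (a ⟨j l, hpj⟩) (a ⟨k l, hpk⟩) *
          (ρ (a ⟨j l, hpj⟩) * ρ (a ⟨k l, hpk⟩))) := by
      intro a
      have h1 : (∏ t, φ (e.symm (a, b) (i t)) (e.symm (a, b) (j t)) (e.symm (a, b) (k t)))
          = φ (e.symm (a, b) (i l)) (e.symm (a, b) (j l)) (e.symm (a, b) (k l)) *
            ∏ t ∈ Finset.univ.erase l,
              φ (e.symm (a, b) (i t)) (e.symm (a, b) (j t)) (e.symm (a, b) (k t)) :=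
        (Finset.mul_prod_erase _ _ (Finset.mem_univ l)).symm
      have h2 : (∏ s, ρ (e.symm (a, b) s)) = ρ (e.symm (a, b) (j l)) *
          (ρ (e.symm (a, b) (k l)) *
            ∏ s ∈ (Finset.univ.erase (j l)).erase (k l), ρ (e.symm (a, b) s)) := by
        rw [← Finset.mul_prod_erase _ _ (Finset.mem_univ (j l)),
          ← Finset.mul_prod_erase _ _
            (Finset.mem_erase.2 ⟨hjk.symm, Finset.mem_univ _⟩)]
      have hrest1 : (∏ t ∈ Finset.univ.erase l,
            φ (e.symm (a, b) (i t)) (e.symm (a, b) (j t)) (e.symm (a, b) (k t)))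
          = ∏ t ∈ Finset.univ.erase l,
            φ (e.symm (a₀, b) (i t)) (e.symm (a₀, b) (j t)) (e.symm (a₀, b) (k t)) := by
        refine Finset.prod_congr rfl fun t ht => ?_
        have htl : t ≠ l := (Finset.mem_erase.1 ht).1
        have hnpi : ¬ p (i t) := by rintro (h | h); exacts [hij t h, hik t h]
        have hnpj : ¬ p (j t) := by rintro (h | h); exacts [(hjj t htl).1 h, (hjj t htl).2 h]
        have hnpk : ¬ p (k t) := by rintro (h | h); exacts [(hkk t htl).1 h, (hkk t htl).2 h]
        rw [hXnp a b _ hnpi, hXnp a b _ hnpj, hXnp a b _ hnpk,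
          hXnp a₀ b _ hnpi, hXnp a₀ b _ hnpj, hXnp a₀ b _ hnpk]
      have hrest2 : (∏ s ∈ (Finset.univ.erase (j l)).erase (k l), ρ (e.symm (a, b) s))
          = ∏ s ∈ (Finset.univ.erase (j l)).erase (k l), ρ (e.symm (a₀, b) s) := by
        refine Finset.prod_congr rfl fun s hs => ?_
        have h1 := (Finset.mem_erase.1 hs).1
        have h2 := (Finset.mem_erase.1 (Finset.mem_erase.1 hs).2).1
        have hnps : ¬ p s := by rintro (h | h); exacts [h2 h, h1 h]
        rw [hXnp a b _ hnps, hXnp a₀ b _ hnps]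
      have hil : e.symm (a, b) (i l) = e.symm (a₀, b) (i l) := by
        rw [hXnp a b _ hnpil, hXnp a₀ b _ hnpil]
      show F (e.symm (a, b)) = _
      rw [hF]
      simp only
      rw [h1, h2, hrest1, hrest2, hil, hXp a b _ hpj, hXp a b _ hpk, hK]
      ring
    simp_rw [hfac]
    rw [integral_const_mul, keyA, mul_zero]
  -- conclude
  have hvol : (volume : Measure (Fin N → Torus d)) = Measure.pi fun _ => volume := volume_pi
  rw [hvol, hstep, integral_prod_symm G hGint]
  simp_rw [hinner]
  simp
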